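/- Let C(X) = Σ_{x∈[0,1]}(1−x)P(X = x) for a finitely-supported nonnegative random variable X. If S is finitely supported and X ~ Ber(p,s) is independent of S with 0 < s ≤ 1, then C(S + X) = C(S) − p·Σ_{x∈(1−s,1]}(1−x)P(S = x) − p·s·P(S ∈ [0, 1−s]). -/

import Mathlib

open MeasureTheory
open scoped NNReal ENNReal

/-- Scaled Bernoulli distribution `Ber(p, s)`. -/
noncomputable def berS (p : ℝ) (hp : p ≤ 1) (s : ℝ) : PMF ℝ :=
  (PMF.bernoulli (Real.toNNReal p) (Real.toNNReal_le_one.mpr hp)).map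
    (fun b => if b then s else 0)

/-- Convolution: distribution of the sum of independent discrete variables. -/
noncomputable def conv (X Y : PMF ℝ) : PMF ℝ := X.bind fun a => Y.map (fun b => a + b)

/-- Discount function `C(X) = Σ_{x ∈ [0,1]} (1 − x)·ℙ(X = x)`. -/
noncomputable def C (X : PMF ℝ) : ℝ :=
  ∑' x : ℝ, if x ∈ Set.Icc (0 : ℝ) 1 then (1 - x) * (X x).toReal else 0

lemma berS_apply (p : ℝ) (hp : p ≤ 1) (s : ℝ) (hs : s ≠ 0) (x : ℝ) :
    berS p hp s x = (if x = s then ENNReal.ofReal p else 0)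
      + (if x = 0 then 1 - ENNReal.ofReal p else 0) := by
  rw [berS, PMF.map_apply, tsum_bool]
  simp only [PMF.bernoulli_apply, Bool.cond_true, Bool.cond_false, if_true, if_false,
    Bool.false_eq_true, Bool.true_eq_false]
  rw [add_comm, ENNReal.coe_sub, ENNReal.coe_one]; rfl

lemma conv_apply' (S B : PMF ℝ) (x : ℝ) :
    conv S B x = ∑' a, S a * B (x - a) := by
  rw [conv, PMF.bind_apply]
  refine tsum_congr fun a => ?_
  congr 1
  rw [PMF.map_apply, tsum_eq_single (x - a)]
  · simp
  · intro b hb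
    rw [if_neg]
    intro hxab
    exact hb (by linarith)

lemma conv_berS_apply (S : PMF ℝ) (p : ℝ) (hp : p ≤ 1) (s : ℝ) (hs : s ≠ 0) (x : ℝ) :
    conv S (berS p hp s) x
      = S (x - s) * ENNReal.ofReal p + S x * (1 - ENNReal.ofReal p) := by
  rw [conv_apply']
  have h : ∀ a : ℝ, S a * berS p hp s (x - a)
      = (S a * if x - a = s then ENNReal.ofReal p else 0)
        + (S a * if x - a = 0 then 1 - ENNReal.ofReal p else 0) := by
    intro a; rw [berS_apply p hp s hs, mul_add]
  rw [tsum_congr h, ENNReal.tsum_add]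
  congr 1
  · rw [tsum_eq_single (x - s)]
    · simp
    · intro a ha; rw [if_neg (fun h' => ha (by linarith)), mul_zero]
  · rw [tsum_eq_single x]
    · simp
    · intro a ha; rw [if_neg (fun h' => ha (by linarith)), mul_zero]

/-- If `X ~ Ber(p, s)` with `0 < s ≤ 1` is independent of a finitely-supported
nonnegative `S`, then
`C(S + X) = C(S) − p·Σ_{x ∈ (1−s,1]}(1−x)ℙ(S = x) − p·s·ℙ(S ∈ [0, 1−s])`. -/
theorem stmt18 (S : PMF ℝ) (hfin : S.support.Finite) (hnn : ∀ x ∈ S.support, 0 ≤ x)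
    (p s : ℝ) (hp0 : 0 ≤ p) (hp1 : p ≤ 1) (hs0 : 0 < s) (hs1 : s ≤ 1) :
    C (conv S (berS p hp1 s)) =
      C S - p * (∑' x : ℝ, if x ∈ Set.Ioc (1 - s) 1 then (1 - x) * (S x).toReal else 0)
        - p * s * (S.toMeasure (Set.Icc 0 (1 - s))).toReal := by
  classical
  have hsne : s ≠ 0 := ne_of_gt hs0
  have hq1 : ENNReal.ofReal p ≤ 1 := ENNReal.ofReal_le_one.mpr hp1
  have hqtop : ENNReal.ofReal p ≠ ⊤ := ENNReal.ofReal_ne_top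
  have hqto : (ENNReal.ofReal p).toReal = p := ENNReal.toReal_ofReal hp0
  have h1q : ((1 : ℝ≥0∞) - ENNReal.ofReal p).toReal = 1 - p := by
    rw [ENNReal.toReal_sub_of_le hq1 ENNReal.one_ne_top, ENNReal.toReal_one, hqto]
  have hS0 : ∀ x : ℝ, x ∉ hfin.toFinset → S x = 0 := fun x hx =>
    (PMF.apply_eq_zero_iff S x).mpr (by simpa using hx)
  have hSneg : ∀ x : ℝ, x < 0 → S x = 0 := by
    intro x hx
    by_contra h
    have hmem : x ∈ S.support := (PMF.mem_support_iff S x).mpr h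
    linarith [hnn x hmem]
  -- the four real-valued functions
  set c1 : ℝ → ℝ := fun x => if x ∈ Set.Icc (0 : ℝ) 1 then (1 - x) * (S x).toReal else 0
    with hc1
  set c2 : ℝ → ℝ := fun x => if x ∈ Set.Ioc (1 - s) 1 then (1 - x) * (S x).toReal else 0
    with hc2
  set k : ℝ → ℝ := fun x => if x ∈ Set.Icc (0 : ℝ) (1 - s) then (1 - s - x) * (S x).toReal else 0
    with hk
  set m : ℝ → ℝ := fun x => if x ∈ Set.Icc (0 : ℝ) (1 - s) then (S x).toReal else 0
    with hm
  have sumc2 : Summable c2 := summable_of_ne_finset_zero (s := hfin.toFinset)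
    (fun x hx => by simp [hc2, hS0 x hx])
  have sumk : Summable k := summable_of_ne_finset_zero (s := hfin.toFinset)
    (fun x hx => by simp [hk, hS0 x hx])
  have summ : Summable m := summable_of_ne_finset_zero (s := hfin.toFinset)
    (fun x hx => by simp [hm, hS0 x hx])
  have sumc1 : Summable c1 := summable_of_ne_finset_zero (s := hfin.toFinset)
    (fun x hx => by simp [hc1, hS0 x hx])
  -- measure as a tsum
  have hM : (S.toMeasure (Set.Icc 0 (1 - s))).toReal = ∑' x, m x := by
    rw [PMF.toMeasure_apply (p := S) measurableSet_Icc,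
      ENNReal.tsum_toReal_eq (fun x => by
        rw [Set.indicator_apply]; split_ifs
        · exact PMF.apply_ne_top S x
        · simp)]
    refine tsum_congr fun x => ?_
    by_cases h : 0 ≤ x ∧ x ≤ 1 - s <;> simp [hm, h, Set.indicator_apply, Set.mem_Icc]
  -- pointwise decomposition identity
  have hA : ∀ x : ℝ, c1 x = c2 x + k x + s * m x := by
    intro x
    simp only [hc1, hc2, hk, hm, Set.mem_Icc, Set.mem_Ioc]
    rcases lt_or_ge x 0 with hx0 | hx0
    · rw [if_neg (fun h => by linarith [h.1]), if_neg (fun h => by linarith [h.1]),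
        if_neg (fun h => by linarith [h.1]), if_neg (fun h => by linarith [h.1])]
      ring
    rcases le_or_gt x (1 - s) with hx1 | hx1
    · rw [if_pos ⟨hx0, by linarith⟩, if_neg (fun h => by linarith [h.1]),
        if_pos ⟨hx0, hx1⟩, if_pos ⟨hx0, hx1⟩]
      ring
    rcases le_or_gt x 1 with hx2 | hx2
    · rw [if_pos ⟨hx0, hx2⟩, if_pos ⟨hx1, hx2⟩, if_neg (fun h => by linarith [h.2]),
        if_neg (fun h => by linarith [h.2])]
      ring
    · rw [if_neg (fun h => by linarith [h.2]), if_neg (fun h => by linarith [h.2]),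
        if_neg (fun h => by linarith [h.2]), if_neg (fun h => by linarith [h.2])]
      ring
  have hsplit : (∑' x, c1 x) = (∑' x, c2 x) + (∑' x, k x) + s * (∑' x, m x) := by
    calc (∑' x, c1 x) = ∑' x, (c2 x + k x + s * m x) := tsum_congr hA
      _ = (∑' x, (c2 x + k x)) + ∑' x, s * m x :=
          Summable.tsum_add (sumc2.add sumk) (summ.mul_left s)
      _ = (∑' x, c2 x) + (∑' x, k x) + s * (∑' x, m x) := by
          rw [Summable.tsum_add sumc2 sumk, tsum_mul_left]
  -- the shifted middle sum
  set h2 : ℝ → ℝ := fun x => if x ∈ Set.Icc (0 : ℝ) 1 then (1 - x) * (S (x - s)).toReal else 0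
    with hh2
  have sumh2 : Summable h2 := by
    refine summable_of_ne_finset_zero (s := hfin.toFinset.image (· + s)) (fun x hx => ?_)
    have : S (x - s) = 0 := by
      apply hS0
      intro hmem
      exact hx (Finset.mem_image.mpr ⟨x - s, hmem, by ring⟩)
    simp [hh2, this]
  have hshift : (∑' x, h2 x) = ∑' x, k x := by
    rw [← (Equiv.addRight s).tsum_eq h2]
    refine tsum_congr fun y => ?_
    have hys : (Equiv.addRight s) y = y + s := rfl
    rw [hys]
    simp only [hh2, hk, Set.mem_Icc, add_sub_cancel_right]
    rcases lt_or_ge y 0 with hy | hy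
    · rw [hSneg y hy, if_neg (show ¬(0 ≤ y ∧ y ≤ 1 - s) from fun h => by linarith [h.1])]
      split_ifs <;> simp
    rcases le_or_gt y (1 - s) with hy1 | hy1
    · rw [if_pos ⟨by linarith, by linarith⟩, if_pos ⟨hy, hy1⟩]
      ring_nf
    · rw [if_neg (fun h => by linarith [h.2]), if_neg (fun h => by linarith [h.2])]
  -- compute C of the convolution
  have hconv : C (conv S (berS p hp1 s)) = (1 - p) * (∑' x, c1 x) + p * (∑' x, k x) := by
    have hpt : ∀ x : ℝ,
        (if x ∈ Set.Icc (0 : ℝ) 1 then (1 - x) * ((conv S (berS p hp1 s)) x).toReal else 0)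
          = (1 - p) * c1 x + p * h2 x := by
      intro x
      simp only [hc1, hh2]
      by_cases hx : x ∈ Set.Icc (0 : ℝ) 1
      · rw [if_pos hx, if_pos hx, if_pos hx, conv_berS_apply S p hp1 s hsne x,
          ENNReal.toReal_add (ENNReal.mul_ne_top (PMF.apply_ne_top _ _) hqtop)
            (ENNReal.mul_ne_top (PMF.apply_ne_top _ _)
              (ne_top_of_le_ne_top ENNReal.one_ne_top tsub_le_self)),
          ENNReal.toReal_mul, ENNReal.toReal_mul, hqto, h1q]
        ring
      · simp [hx]
    rw [C, tsum_congr hpt,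
      Summable.tsum_add (sumc1.mul_left (1 - p)) (sumh2.mul_left p),
      tsum_mul_left, tsum_mul_left, hshift]
  rw [hconv, hM]
  have hCS : C S = ∑' x, c1 x := by rw [C]
  rw [hCS]
  linear_combination (-p) * hsplit
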